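/- Let F be a piecewise affine function on a compact polyhedral set Theta in R^q, i.e., Theta decomposes into finitely many polyhedra on each of which F is affine. Define r_d(theta) = max{ -F'(theta; d) : d in T(theta; Theta), ||d|| <= 1 }, where T(theta; Theta) is the tangent cone. Then there exists eta > 0 such that dist(theta, S^d) <= eta * r_d(theta) for all theta in Theta, where S^d is the set of d-stationary points of F on Theta. -/

import Mathlib

open Filter Set Metric
open scoped Topology

/-- One-sided directional derivative `F'(θ; d)`. -/
noncomputable def dirDeriv {q : ℕ} (F : EuclideanSpace ℝ (Fin q) → ℝ)
    (θ d : EuclideanSpace ℝ (Fin q)) : ℝ :=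
  derivWithin (fun t : ℝ => F (θ + t • d)) (Set.Ici 0) 0

section AuxStmt16
variable {q : ℕ}
local notation "EE" => EuclideanSpace ℝ (Fin q)

private lemma stmt16_poly_closed {m : ℕ} (B : Fin m → (EE →L[ℝ] ℝ)) (b : Fin m → ℝ) :
    IsClosed {x : EE | ∀ j, B j x ≤ b j} := by
  have : {x : EE | ∀ j, B j x ≤ b j} = ⋂ j, {x : EE | B j x ≤ b j} := by
    ext x; simp [Set.mem_iInter]
  rw [this]
  exact isClosed_iInter fun j => isClosed_le (B j).continuous continuous_const

private lemma stmt16_poly_convex {m : ℕ} (B : Fin m → (EE →L[ℝ] ℝ)) (b : Fin m → ℝ) :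
    Convex ℝ {x : EE | ∀ j, B j x ≤ b j} := by
  intro x hx y hy a c ha hc hac
  intro j
  have h : (B j) (a • x + c • y) = a * B j x + c * B j y := by
    simp [map_add, map_smul]
  rw [Set.mem_setOf_eq] at *
  rw [h]
  have h2 : a * b j + c * b j = b j := by rw [← add_mul, hac, one_mul]
  linarith [mul_le_mul_of_nonneg_left (hx j) ha, mul_le_mul_of_nonneg_left (hy j) hc]

private lemma stmt16_eventually_seg {m : ℕ} {B : Fin m → (EE →L[ℝ] ℝ)} {b : Fin m → ℝ} {θ d : EE}
    (hθ : ∀ j, B j θ ≤ b j) (hact : ∀ j, B j θ = b j → B j d ≤ 0) :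
    ∀ᶠ t in 𝓝[Set.Ici (0:ℝ)] 0, θ + t • d ∈ {x : EE | ∀ j, B j x ≤ b j} := by
  simp only [Set.mem_setOf_eq]
  rw [Filter.eventually_all]
  intro j
  by_cases h : B j θ = b j
  · filter_upwards [self_mem_nhdsWithin] with t ht
    have : (B j) (θ + t • d) = B j θ + t * B j d := by simp [map_add, map_smul]
    rw [this, h]
    nlinarith [hact j h, Set.mem_Ici.1 ht]
  · have hlt : B j θ < b j := lt_of_le_of_ne (hθ j) h
    have hcont : Continuous fun t : ℝ => (B j) (θ + t • d) :=
      (B j).continuous.comp (continuous_const.add (continuous_id.smul continuous_const))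
    have hev : ∀ᶠ t in 𝓝 (0:ℝ), (B j) (θ + t • d) < b j := by
      have h0 : (B j) (θ + (0:ℝ) • d) < b j := by simpa using hlt
      exact (hcont.tendsto 0).eventually (Filter.Tendsto.eventually_lt_const h0 tendsto_id) |>.mono
        (fun t ht => ht)
    exact (hev.filter_mono nhdsWithin_le_nhds).mono fun t ht => le_of_lt ht

private lemma stmt16_dirDeriv_eq {F : EE → ℝ} {P : Set EE} {φ : EE →L[ℝ] ℝ} {c : ℝ}
    (hF : ∀ x ∈ P, F x = φ x + c) {θ d : EE}
    (h : ∀ᶠ t in 𝓝[Set.Ici (0:ℝ)] 0, θ + t • d ∈ P) :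
    dirDeriv F θ d = φ d := by
  have hθP : θ ∈ P := by
    have h0 := mem_of_mem_nhdsWithin (Set.mem_Ici.2 le_rfl) h
    simpa using h0
  have h1 : HasDerivWithinAt (fun t : ℝ => φ θ + t * φ d + c) (φ d) (Set.Ici 0) 0 :=
    (((hasDerivAt_mul_const (φ d)).const_add (φ θ)).add_const c).hasDerivWithinAt
  have heq : (fun t : ℝ => F (θ + t • d)) =ᶠ[𝓝[Set.Ici (0:ℝ)] 0]
      (fun t : ℝ => φ θ + t * φ d + c) := by
    filter_upwards [h] with t ht
    rw [hF _ ht]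
    simp [map_add, map_smul]
  have h0 : F (θ + (0:ℝ) • d) = φ θ + (0:ℝ) * φ d + c := by
    rw [show θ + (0:ℝ) • d = θ by simp, hF _ hθP]; ring
  have hd := h1.congr_of_eventuallyEq heq h0
  exact hd.derivWithin (uniqueDiffOn_Ici 0 0 (Set.mem_Ici.2 le_rfl))

private lemma stmt16_tendsto_seq :
    Tendsto (fun n : ℕ => (1:ℝ)/(n+1)) atTop (𝓝[Set.Ici (0:ℝ)] 0) := by
  apply tendsto_nhdsWithin_of_tendsto_nhds_of_eventually_within
  · exact tendsto_one_div_add_atTop_nhds_zero_nat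
  · exact Eventually.of_forall fun n => Set.mem_Ici.2 (by positivity)

private lemma stmt16_tcone_of_old {Θ : Set EE} {θ y : EE} (c : ℕ → ℝ) (dd : ℕ → EE)
    (h1 : ∀ᶠ n in atTop, θ + dd n ∈ Θ) (h2 : Tendsto (fun n => ‖c n‖) atTop atTop)
    (h3 : Tendsto (fun n => c n • dd n) atTop (𝓝 y)) : y ∈ tangentConeAt ℝ Θ θ :=
  mem_tangentConeAt_of_seq atTop c dd (tangentConeAt.lim_zero atTop h2 h3) h1 h3

private lemma stmt16_mem_tcone {Θ : Set EE} {θ d : EE}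
    (h : ∀ᶠ t in 𝓝[Set.Ici (0:ℝ)] 0, θ + t • d ∈ Θ) :
    d ∈ tangentConeAt ℝ Θ θ := by
  refine stmt16_tcone_of_old (fun n => (n:ℝ)+1) (fun n => ((1:ℝ)/(n+1)) • d) ?_ ?_ ?_
  · exact stmt16_tendsto_seq.eventually h
  · have h2 : Tendsto (fun n : ℕ => (n:ℝ)+1) atTop atTop :=
      tendsto_atTop_add_const_right _ 1 tendsto_natCast_atTop_atTop
    exact h2.congr (fun n => (Real.norm_of_nonneg (by positivity)).symm)
  · have heq : ∀ n : ℕ, ((n:ℝ)+1) • (((1:ℝ)/(n+1)) • d) = d := by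
      intro n
      rw [smul_smul]
      have h1 : ((n:ℝ)+1) * (1/(n+1)) = 1 := by field_simp
      rw [h1, one_smul]
    rw [show (fun n : ℕ => ((n:ℝ)+1) • (((1:ℝ)/(n+1)) • d)) = fun _ => d from funext heq]
    exact tendsto_const_nhds

private lemma stmt16_neg_mem_tcone {Θ : Set EE} {θ d : EE}
    (h : ∀ᶠ t in 𝓝[Set.Ici (0:ℝ)] 0, θ + t • d ∈ Θ) :
    -d ∈ tangentConeAt ℝ Θ θ := by
  refine stmt16_tcone_of_old (fun n => -((n:ℝ)+1)) (fun n => ((1:ℝ)/(n+1)) • d) ?_ ?_ ?_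
  · exact stmt16_tendsto_seq.eventually h
  · have h2 : Tendsto (fun n : ℕ => (n:ℝ)+1) atTop atTop :=
      tendsto_atTop_add_const_right _ 1 tendsto_natCast_atTop_atTop
    refine h2.congr fun n => ?_
    rw [norm_neg, Real.norm_of_nonneg (by positivity)]
  · have heq : ∀ n : ℕ, (-((n:ℝ)+1)) • (((1:ℝ)/(n+1)) • d) = -d := by
      intro n
      rw [smul_smul]
      have h1 : (-((n:ℝ)+1)) * (1/(n+1)) = -1 := by field_simp
      rw [h1, neg_one_smul]
    rw [show (fun n : ℕ => (-((n:ℝ)+1)) • (((1:ℝ)/(n+1)) • d)) = fun _ => -d from funext heq]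
    exact tendsto_const_nhds

private lemma stmt16_tcone_subset {m : ℕ} {B : Fin m → (EE →L[ℝ] ℝ)} {b : Fin m → ℝ} {θ : EE} :
    tangentConeAt ℝ {x : EE | ∀ j, B j x ≤ b j} θ ⊆
      {d : EE | ∀ j, B j θ = b j → B j d ≤ 0} ∪ {d : EE | ∀ j, B j θ = b j → B j (-d) ≤ 0} := by
  intro y hy
  obtain ⟨c, dseq, hc, hmem, hlim⟩ := mem_tangentConeAt_iff_exists_seq.1 hy
  have hkey : ∀ j, B j θ = b j → ∀ n, θ + dseq n ∈ {x : EE | ∀ j, B j x ≤ b j} →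
      B j (dseq n) ≤ 0 := by
    intro j hj n hn
    have h3 := hn j
    rw [map_add] at h3
    linarith [hj ▸ h3]
  have hlim' : ∀ j, Tendsto (fun n => c n * B j (dseq n)) atTop (𝓝 (B j y)) := by
    intro j
    have h1 : Tendsto (fun n => B j (c n • dseq n)) atTop (𝓝 (B j y)) :=
      ((B j).continuous.tendsto _).comp hlim
    refine h1.congr fun n => ?_
    rw [map_smul, smul_eq_mul]
  by_cases hpos : ∃ᶠ n in atTop, 0 ≤ c n
  · left
    intro j hj
    by_contra hcon
    push_neg at hcon
    have hev : ∀ᶠ n in atTop, B j y / 2 < c n * B j (dseq n) :=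
      (hlim' j).eventually (eventually_gt_nhds (by linarith))
    have hfr : ∃ᶠ n in atTop, (0 ≤ c n ∧ θ + dseq n ∈ {x : EE | ∀ j, B j x ≤ b j}) ∧
        B j y / 2 < c n * B j (dseq n) :=
      (hpos.and_eventually hmem).and_eventually hev
    obtain ⟨n, ⟨hcn, hn⟩, hgt⟩ := hfr.exists
    have h1 : c n * B j (dseq n) ≤ 0 :=
      mul_nonpos_of_nonneg_of_nonpos hcn (hkey j hj n hn)
    linarith
  · right
    intro j hj
    rw [map_neg, neg_nonpos]
    have hneg : ∀ᶠ n in atTop, c n < 0 := by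
      rw [Filter.not_frequently] at hpos
      filter_upwards [hpos] with n hn
      push_neg at hn; exact hn
    have hev : ∀ᶠ n in atTop, 0 ≤ c n * B j (dseq n) := by
      filter_upwards [hneg, hmem] with n h1 h2
      have h3 := hkey j hj n h2
      nlinarith
    exact ge_of_tendsto (hlim' j) hev

private lemma stmt16_coverage {n : ℕ} {P : Fin n → Set EE} (hcover : Set.univ = ⋃ i, P i)
    {mP : Fin n → ℕ} {C : ∀ i, Fin (mP i) → (EE →L[ℝ] ℝ)} {cc : ∀ i, Fin (mP i) → ℝ}
    (hP : ∀ i, P i = {x | ∀ j, C i j x ≤ cc i j}) (θ d : EE) :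
    ∃ i, θ ∈ P i ∧ ∀ j, C i j θ = cc i j → C i j d ≤ 0 := by
  have hne : Nonempty (Fin n) := by
    have h0 : (0 : EE) ∈ ⋃ i, P i := hcover ▸ Set.mem_univ 0
    obtain ⟨i, -⟩ := Set.mem_iUnion.1 h0
    exact ⟨i⟩
  have hclaim : ∃ i, ∀ ε > (0:ℝ), ∃ t, 0 < t ∧ t ≤ ε ∧ θ + t • d ∈ P i := by
    by_contra hcon
    push_neg at hcon
    choose ε hε hbad using hcon
    set t0 : ℝ := Finset.univ.inf' (Finset.univ_nonempty) ε with ht0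
    have ht0pos : 0 < t0 := by
      rw [ht0, Finset.lt_inf'_iff]
      exact fun i _ => hε i
    have hm : θ + t0 • d ∈ ⋃ i, P i := hcover ▸ Set.mem_univ _
    obtain ⟨i, hi⟩ := Set.mem_iUnion.1 hm
    exact hbad i t0 ht0pos (Finset.inf'_le _ (Finset.mem_univ i)) hi
  obtain ⟨i, hi⟩ := hclaim
  have hclosed : IsClosed (P i) := by
    rw [hP i]; exact stmt16_poly_closed _ _
  have hθP : θ ∈ P i := by
    rw [← hclosed.closure_eq, mem_closure_iff_nhds]
    intro U hU
    have hcont : Tendsto (fun t : ℝ => θ + t • d) (𝓝 0) (𝓝 θ) := by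
      have h2 : Continuous fun t : ℝ => θ + t • d :=
        continuous_const.add (continuous_id.smul continuous_const)
      simpa using h2.tendsto 0
    have hpre : (fun t : ℝ => θ + t • d) ⁻¹' U ∈ 𝓝 (0:ℝ) := hcont hU
    obtain ⟨δ, hδ, hball⟩ := Metric.mem_nhds_iff.1 hpre
    obtain ⟨t, ht1, ht2, ht3⟩ := hi (δ/2) (by linarith)
    refine ⟨θ + t • d, ?_, ht3⟩
    apply hball
    rw [Metric.mem_ball]
    simp only [Real.dist_eq, sub_zero]
    rw [abs_of_pos ht1]
    linarith
  refine ⟨i, hθP, fun j hj => ?_⟩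
  obtain ⟨t, ht1, ht2, ht3⟩ := hi 1 one_pos
  rw [hP i] at ht3
  have h4 := ht3 j
  rw [map_add, map_smul, smul_eq_mul, hj] at h4
  nlinarith

end AuxStmt16

theorem stmt16 {q : ℕ} (Θ : Set (EuclideanSpace ℝ (Fin q))) (hcomp : IsCompact Θ)
    (hΘpoly : ∃ (m : ℕ) (B : Fin m → (EuclideanSpace ℝ (Fin q) →L[ℝ] ℝ)) (b : Fin m → ℝ),
      Θ = {x | ∀ j, B j x ≤ b j})
    (F : EuclideanSpace ℝ (Fin q) → ℝ)
    (hPA : ∃ (n : ℕ) (P : Fin n → Set (EuclideanSpace ℝ (Fin q))),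
      (Set.univ = ⋃ i, P i) ∧
      (∀ i, ∃ (m : ℕ) (B : Fin m → (EuclideanSpace ℝ (Fin q) →L[ℝ] ℝ)) (b : Fin m → ℝ),
        P i = {x | ∀ j, B j x ≤ b j}) ∧
      (∀ i, ∃ (φ : EuclideanSpace ℝ (Fin q) →L[ℝ] ℝ) (c : ℝ), ∀ x ∈ P i, F x = φ x + c)) :
    ∃ η > (0 : ℝ), ∀ θ ∈ Θ,
      Metric.infDist θ {θ' ∈ Θ | ∀ θ'' ∈ Θ, 0 ≤ dirDeriv F θ' (θ'' - θ')} ≤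
        η * sSup ((fun d => -dirDeriv F θ d) ''
          {d | d ∈ tangentConeAt ℝ Θ θ ∧ ‖d‖ ≤ 1}) := by
  classical
  obtain ⟨m, B, b, hΘ⟩ := hΘpoly
  obtain ⟨n, P, hcover, hPpoly, hFaff⟩ := hPA
  choose mP C cc hP using hPpoly
  choose φ cst hF using hFaff
  set Sd : Set (EuclideanSpace ℝ (Fin q)) :=
    {θ' ∈ Θ | ∀ θ'' ∈ Θ, 0 ≤ dirDeriv F θ' (θ'' - θ')} with hSd
  set rf : EuclideanSpace ℝ (Fin q) → ℝ := fun θ =>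
    sSup ((fun d => -dirDeriv F θ d) '' {d | d ∈ tangentConeAt ℝ Θ θ ∧ ‖d‖ ≤ 1}) with hrf
  have hne : Nonempty (Fin n) := by
    have h0 : (0 : EuclideanSpace ℝ (Fin q)) ∈ ⋃ i, P i := hcover ▸ Set.mem_univ 0
    obtain ⟨i, -⟩ := Set.mem_iUnion.1 h0
    exact ⟨i⟩
  have hconv : Convex ℝ Θ := hΘ ▸ stmt16_poly_convex B b
  -- H1: the directional derivative formula
  have H1 : ∀ (θ d : EuclideanSpace ℝ (Fin q)) i, θ ∈ P i →
      (∀ j, C i j θ = cc i j → C i j d ≤ 0) → dirDeriv F θ d = φ i d := by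
    intro θ d i hθi hact
    refine stmt16_dirDeriv_eq (hF i) ?_
    have hθ' : ∀ j, C i j θ ≤ cc i j := by rw [hP i] at hθi; exact hθi
    have := stmt16_eventually_seg hθ' hact
    rw [← hP i] at this
    exact this
  have H2 := stmt16_coverage hcover hP
  -- Lipschitz-type bound
  set M : ℝ := Finset.univ.sup' Finset.univ_nonempty (fun i => ‖φ i‖) with hM
  have hM0 : 0 ≤ M := by
    obtain ⟨i⟩ := hne
    rw [hM]
    exact le_trans (norm_nonneg (φ i))
      (Finset.le_sup' (fun i => ‖φ i‖) (Finset.mem_univ i))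
  have H3 : ∀ (θ d : EuclideanSpace ℝ (Fin q)), ‖d‖ ≤ 1 → -dirDeriv F θ d ≤ M := by
    intro θ d hd
    obtain ⟨i, h1, h2⟩ := H2 θ d
    rw [H1 θ d i h1 h2]
    calc -(φ i) d ≤ |(φ i) d| := neg_le_abs _
      _ ≤ ‖φ i‖ * ‖d‖ := by
          rw [← Real.norm_eq_abs]; exact (φ i).le_opNorm d
      _ ≤ M * 1 := by
          apply mul_le_mul ?_ hd (norm_nonneg d) hM0
          rw [hM]
          exact Finset.le_sup' (fun i => ‖φ i‖) (Finset.mem_univ i)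
      _ = M := mul_one M
  have H4 : ∀ θ : EuclideanSpace ℝ (Fin q),
      BddAbove ((fun d => -dirDeriv F θ d) '' {d | d ∈ tangentConeAt ℝ Θ θ ∧ ‖d‖ ≤ 1}) := by
    intro θ
    refine ⟨M, ?_⟩
    rintro y ⟨d, ⟨-, hd⟩, rfl⟩
    exact H3 θ d hd
  have Hzero : ∀ θ, dirDeriv F θ 0 = 0 := by
    intro θ
    obtain ⟨i, h1, h2⟩ := H2 θ 0
    rw [H1 θ 0 i h1 (fun j _ => by simp), map_zero]
  have H5 : ∀ θ ∈ Θ, (0:ℝ) ∈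
      ((fun d => -dirDeriv F θ d) '' {d | d ∈ tangentConeAt ℝ Θ θ ∧ ‖d‖ ≤ 1}) := by
    intro θ hθ
    refine ⟨0, ⟨?_, by simp⟩, by simp only [Hzero θ, neg_zero]⟩
    exact stmt16_mem_tcone (Eventually.of_forall fun t => by simpa using hθ)
  have H6 : ∀ θ ∈ Θ, 0 ≤ rf θ := fun θ hθ => le_csSup (H4 θ) (H5 θ hθ)
  -- H7 : tangent cone characterization
  have H7 : ∀ θ ∈ Θ, tangentConeAt ℝ Θ θ =
      {d | ∀ j, B j θ = b j → B j d ≤ 0} ∪ {d | ∀ j, B j θ = b j → B j (-d) ≤ 0} := by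
    intro θ hθ
    apply Set.Subset.antisymm
    · rw [hΘ]; exact stmt16_tcone_subset
    · rintro d (hd | hd)
      · apply stmt16_mem_tcone
        have hθ' : ∀ j, B j θ ≤ b j := by rw [hΘ] at hθ; exact hθ
        have := stmt16_eventually_seg hθ' hd
        rw [← hΘ] at this
        exact this
      · have hθ' : ∀ j, B j θ ≤ b j := by rw [hΘ] at hθ; exact hθ
        have hev := stmt16_eventually_seg hθ' hd
        rw [← hΘ] at hev
        have := stmt16_neg_mem_tcone hev
        simpa using this
  -- H8 : the state determines rf
  have H8 : ∀ θ1 ∈ Θ, ∀ θ2 ∈ Θ,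
      (∀ j, (B j θ1 = b j ↔ B j θ2 = b j)) →
      (∀ i, (θ1 ∈ P i ↔ θ2 ∈ P i)) →
      (∀ i j, (C i j θ1 = cc i j ↔ C i j θ2 = cc i j)) →
      rf θ1 = rf θ2 := by
    intro θ1 hθ1 θ2 hθ2 hB hPi hC
    have hdd : ∀ d, dirDeriv F θ1 d = dirDeriv F θ2 d := by
      intro d
      obtain ⟨i, h1, h2⟩ := H2 θ1 d
      rw [H1 θ1 d i h1 h2, H1 θ2 d i ((hPi i).1 h1) (fun j hj => h2 j ((hC i j).2 hj))]
    have hT : tangentConeAt ℝ Θ θ1 = tangentConeAt ℝ Θ θ2 := by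
      rw [H7 θ1 hθ1, H7 θ2 hθ2]
      have e1 : {d : EuclideanSpace ℝ (Fin q) | ∀ j, B j θ1 = b j → B j d ≤ 0} =
          {d | ∀ j, B j θ2 = b j → B j d ≤ 0} := by
        ext d; constructor <;> intro h j hj
        · exact h j ((hB j).2 hj)
        · exact h j ((hB j).1 hj)
      have e2 : {d : EuclideanSpace ℝ (Fin q) | ∀ j, B j θ1 = b j → B j (-d) ≤ 0} =
          {d | ∀ j, B j θ2 = b j → B j (-d) ≤ 0} := by
        ext d; constructor <;> intro h j hj
        · exact h j ((hB j).2 hj)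
        · exact h j ((hB j).1 hj)
      rw [e1, e2]
    rw [hrf]
    simp only
    rw [hT]
    congr 1
    ext y
    constructor <;> rintro ⟨d, hd, rfl⟩
    · exact ⟨d, hd, by simp only [hdd d]⟩
    · exact ⟨d, hd, by simp only [hdd d]⟩
  -- H9 : rf has finite image on Θ
  have H9 : (rf '' Θ).Finite := by
    set σ : EuclideanSpace ℝ (Fin q) →
        ((Fin m → Prop) × (Fin n → Prop) × (∀ i, Fin (mP i) → Prop)) :=
      fun θ => ⟨fun j => B j θ = b j, fun i => θ ∈ P i, fun i j => C i j θ = cc i j⟩ with hσ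
    have hsub : rf '' Θ ⊆ ⋃ s : ((Fin m → Prop) × (Fin n → Prop) × (∀ i, Fin (mP i) → Prop)),
        {y | ∃ θ ∈ Θ, σ θ = s ∧ rf θ = y} := by
      rintro y ⟨θ, hθ, rfl⟩
      exact Set.mem_iUnion.2 ⟨σ θ, θ, hθ, rfl, rfl⟩
    refine Set.Finite.subset (Set.finite_iUnion fun s => ?_) hsub
    apply Set.Subsingleton.finite
    rintro y1 ⟨θ1, hθ1, hs1, rfl⟩ y2 ⟨θ2, hθ2, hs2, rfl⟩
    have hσeq : σ θ1 = σ θ2 := hs1.trans hs2.symm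
    have c1 := congrArg Prod.fst hσeq
    have c2 := congrArg (fun p => p.2.1) hσeq
    have c3 := congrArg (fun p => p.2.2) hσeq
    refine H8 θ1 hθ1 θ2 hθ2 (fun j => iff_of_eq (congrFun c1 j))
      (fun i => iff_of_eq (congrFun c2 i))
      (fun i j => iff_of_eq (congrFun (congrFun c3 i) j))
  -- H10 : rf θ = 0 implies stationarity
  have H10 : ∀ θ ∈ Θ, rf θ ≤ 0 → θ ∈ Sd := by
    intro θ hθ hr
    refine ⟨hθ, fun θ'' hθ'' => ?_⟩
    set d : EuclideanSpace ℝ (Fin q) := θ'' - θ with hd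
    by_cases hd0 : d = 0
    · rw [hd0, Hzero θ]
    · have hdn : (0:ℝ) < ‖d‖ := norm_pos_iff.2 hd0
      set u : EuclideanSpace ℝ (Fin q) := ‖d‖⁻¹ • d with hu
      have hun : ‖u‖ = 1 := by
        rw [hu, norm_smul, norm_inv, norm_norm, inv_mul_cancel₀ (ne_of_gt hdn)]
      have hseg : ∀ t ∈ Set.Icc (0:ℝ) ‖d‖, θ + t • u ∈ Θ := by
        intro t ht
        have h1 : θ + t • u = (1 - t/‖d‖) • θ + (t/‖d‖) • θ'' := by
          rw [hu, hd, smul_smul]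
          rw [div_eq_mul_inv, mul_comm]
          module
        rw [h1]
        apply hconv hθ hθ'' (by
          have := ht.2
          have h2 : t/‖d‖ ≤ 1 := by
            rw [div_le_one hdn]; exact ht.2
          linarith) (div_nonneg ht.1 hdn.le) (by ring)
      have huT : u ∈ tangentConeAt ℝ Θ θ := by
        apply stmt16_mem_tcone
        have hIic : Set.Iic ‖d‖ ∈ 𝓝 (0:ℝ) := Iic_mem_nhds hdn
        filter_upwards [self_mem_nhdsWithin, mem_nhdsWithin_of_mem_nhds hIic] with t ht0 ht1
        exact hseg t ⟨Set.mem_Ici.1 ht0, Set.mem_Iic.1 ht1⟩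
      have hle : -dirDeriv F θ u ≤ rf θ :=
        le_csSup (H4 θ) ⟨u, ⟨huT, le_of_eq hun⟩, rfl⟩
      have hu0 : 0 ≤ dirDeriv F θ u := by linarith
      obtain ⟨i, h1, h2⟩ := H2 θ u
      have hval : dirDeriv F θ u = φ i u := H1 θ u i h1 h2
      have h2' : ∀ j, C i j θ = cc i j → C i j d ≤ 0 := by
        intro j hj
        have := h2 j hj
        have hdu : d = ‖d‖ • u := by
          rw [hu, smul_smul, mul_inv_cancel₀ (ne_of_gt hdn), one_smul]
        rw [hdu, map_smul, smul_eq_mul]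
        exact mul_nonpos_of_nonneg_of_nonpos (le_of_lt hdn) this
      have hvald : dirDeriv F θ d = φ i d := H1 θ d i h1 h2'
      rw [hvald]
      have hdu : d = ‖d‖ • u := by
        rw [hu, smul_smul, mul_inv_cancel₀ (ne_of_gt hdn), one_smul]
      rw [hdu, map_smul, smul_eq_mul]
      have h8 : 0 ≤ φ i u := by rw [← hval]; exact hu0
      exact mul_nonneg (norm_nonneg d) h8
  -- H11 : F is continuous
  have hFcont : Continuous F := by
    refine (locallyFinite_of_finite P).continuous hcover.symm
      (fun i => by rw [hP i]; exact stmt16_poly_closed _ _) (fun i => ?_)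
    exact ContinuousOn.congr (((φ i).continuous.add continuous_const).continuousOn)
      (fun x hx => hF i x hx)
  -- H12 : Sd is nonempty if Θ is
  have H12 : ∀ θ₀ ∈ Θ, Sd.Nonempty := by
    intro θ₀ hθ₀
    obtain ⟨θs, hθs, hmin⟩ := hcomp.exists_isMinOn ⟨θ₀, hθ₀⟩ hFcont.continuousOn
    refine ⟨θs, hθs, fun θ'' hθ'' => ?_⟩
    set d : EuclideanSpace ℝ (Fin q) := θ'' - θs with hd
    obtain ⟨i, h1, h2⟩ := H2 θs d
    rw [H1 θs d i h1 h2]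
    have hev1 : ∀ᶠ t in 𝓝[Set.Ici (0:ℝ)] 0, θs + t • d ∈ P i := by
      have hθ' : ∀ j, C i j θs ≤ cc i j := by rw [hP i] at h1; exact h1
      have := stmt16_eventually_seg hθ' h2
      rw [← hP i] at this
      exact this
    have hev2 : ∀ᶠ t in 𝓝[Set.Ici (0:ℝ)] 0, θs + t • d ∈ Θ := by
      have hIic : Set.Iic (1:ℝ) ∈ 𝓝 (0:ℝ) := Iic_mem_nhds one_pos
      filter_upwards [self_mem_nhdsWithin, mem_nhdsWithin_of_mem_nhds hIic] with t ht0 ht1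
      have h3 : θs + t • d = (1 - t) • θs + t • θ'' := by
        rw [hd]; module
      rw [h3]
      exact hconv hθs hθ'' (by linarith [Set.mem_Iic.1 ht1]) (Set.mem_Ici.1 ht0) (by ring)
    have hev3 : ∀ᶠ t in 𝓝[Set.Ici (0:ℝ)] 0, 0 ≤ t * φ i d := by
      filter_upwards [hev1, hev2, self_mem_nhdsWithin] with t htP htΘ ht0
      have hmin' : F θs ≤ F (θs + t • d) := hmin htΘ
      rw [hF i _ htP, hF i _ h1] at hmin'
      have h4 : (φ i) (θs + t • d) = φ i θs + t * φ i d := by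
        simp [map_add, map_smul]
      rw [h4] at hmin'
      linarith
    have hev4 : ∀ᶠ t in 𝓝[Set.Ioi (0:ℝ)] 0, 0 ≤ t * φ i d :=
      hev3.filter_mono (nhdsWithin_mono 0 Set.Ioi_subset_Ici_self)
    obtain ⟨t, ht⟩ := (hev4.and self_mem_nhdsWithin).exists
    have htpos : 0 < t := Set.mem_Ioi.1 ht.2
    nlinarith [ht.1]
  -- Assemble everything
  set V : Set ℝ := {y ∈ rf '' Θ | 0 < y} with hV
  have hVfin : V.Finite := H9.subset (Set.sep_subset _ _)
  by_cases hVne : V.Nonempty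
  · obtain ⟨δ, hδV, hδmin⟩ := Set.exists_min_image V id hVfin hVne
    have hδpos : 0 < δ := hδV.2
    refine ⟨(Metric.diam Θ + 1) / δ, div_pos (by positivity) hδpos, ?_⟩
    intro θ hθ
    by_cases hr : rf θ ≤ 0
    · have hr0 : rf θ = 0 := le_antisymm hr (H6 θ hθ)
      have hmem : θ ∈ Sd := H10 θ hθ hr
      have : Metric.infDist θ Sd = 0 := Metric.infDist_zero_of_mem hmem
      rw [hSd] at this
      rw [this]
      rw [show sSup ((fun d => -dirDeriv F θ d) ''
          {d | d ∈ tangentConeAt ℝ Θ θ ∧ ‖d‖ ≤ 1}) = rf θ from rfl, hr0, mul_zero]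
    · push_neg at hr
      have hrV : rf θ ∈ V := ⟨⟨θ, hθ, rfl⟩, hr⟩
      have hδle : δ ≤ rf θ := hδmin _ hrV
      obtain ⟨θs, hθsSd⟩ := H12 θ hθ
      have hθsΘ : θs ∈ Θ := hθsSd.1
      have hLHS : Metric.infDist θ Sd ≤ Metric.diam Θ := by
        refine le_trans (Metric.infDist_le_dist_of_mem hθsSd) ?_
        exact Metric.dist_le_diam_of_mem hcomp.isBounded hθ hθsΘ
      have hRHS : Metric.diam Θ ≤ (Metric.diam Θ + 1) / δ * rf θ := by
        have h5 : (Metric.diam Θ + 1) / δ * δ = Metric.diam Θ + 1 :=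
          div_mul_cancel₀ _ (ne_of_gt hδpos)
        have h6 : (Metric.diam Θ + 1) / δ * δ ≤ (Metric.diam Θ + 1) / δ * rf θ :=
          mul_le_mul_of_nonneg_left hδle (le_of_lt (div_pos (by positivity) hδpos))
        linarith
      rw [hSd] at hLHS
      exact le_trans hLHS hRHS
  · refine ⟨1, one_pos, ?_⟩
    intro θ hθ
    have hr0 : rf θ = 0 := by
      by_contra hne'
      have hr : 0 < rf θ := lt_of_le_of_ne (H6 θ hθ) (Ne.symm hne')
      exact hVne ⟨rf θ, ⟨θ, hθ, rfl⟩, hr⟩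
    have hmem : θ ∈ Sd := H10 θ hθ (le_of_eq hr0)
    have h7 : Metric.infDist θ Sd = 0 := Metric.infDist_zero_of_mem hmem
    rw [hSd] at h7
    rw [h7]
    rw [show sSup ((fun d => -dirDeriv F θ d) ''
        {d | d ∈ tangentConeAt ℝ Θ θ ∧ ‖d‖ ≤ 1}) = rf θ from rfl, hr0, mul_zero]
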